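/- For all y > 0 and x > 1, we have [Γ(x+y+1)/Γ(y+1)]^{1/x} / [Γ(x+y+2)/Γ(y+1)]^{1/(x+1)} < sqrt((x+y)/(x+y+1)). -/

import Mathlib

open Real Filter Finset

noncomputable def auxC (x u : ℝ) : ℝ :=
  (Real.log (u + x) - Real.log u) - x * (Real.log (u + x + 1) - Real.log (u + x)) +
    (x ^ 2 + x) / 2 * (Real.log (u + x + 1) - 2 * Real.log (u + x) + Real.log (u + x - 1))

noncomputable def auxD (x u : ℝ) : ℝ :=
  x * Real.log (u + x) - (x ^ 2 + x) / 2 * (Real.log (u + x) - Real.log (u + x - 1)) -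
    (Real.log (Real.Gamma (u + x)) - Real.log (Real.Gamma u))

lemma auxC_hasDeriv (x u : ℝ) (hx : 1 < x) (hu : 0 < u) :
    HasDerivAt (auxC x)
      ((1 / (u + x) - 1 / u) - x * (1 / (u + x + 1) - 1 / (u + x)) +
        (x ^ 2 + x) / 2 * (1 / (u + x + 1) - 2 * (1 / (u + x)) + 1 / (u + x - 1))) u := by
  have h1 : HasDerivAt (fun u : ℝ => Real.log (u + x)) (1 / (u + x)) u := by
    simpa using ((hasDerivAt_id u).add_const x).log (by positivity)
  have h2 : HasDerivAt (fun u : ℝ => Real.log u) (1 / u) u := by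
    simpa using (hasDerivAt_id u).log hu.ne'
  have h3 : HasDerivAt (fun u : ℝ => Real.log (u + x + 1)) (1 / (u + x + 1)) u := by
    simpa using (((hasDerivAt_id u).add_const x).add_const 1).log (by positivity)
  have h4 : HasDerivAt (fun u : ℝ => Real.log (u + x - 1)) (1 / (u + x - 1)) u := by
    have hpos : (0:ℝ) < u + x - 1 := by linarith
    simpa using (((hasDerivAt_id u).add_const x).sub_const 1).log (by positivity)
  unfold auxC
  exact ((h1.sub h2).sub ((h3.sub h1).const_mul x)).add
    (((h3.sub (h1.const_mul 2)).add h4).const_mul ((x ^ 2 + x) / 2))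

lemma auxC_anti (x : ℝ) (hx : 1 < x) : StrictAntiOn (auxC x) (Set.Ioi 0) := by
  apply strictAntiOn_of_deriv_neg (convex_Ioi 0)
  · intro u hu
    exact (auxC_hasDeriv x u hx hu).continuousAt.continuousWithinAt
  · intro u hu
    rw [interior_Ioi] at hu
    have hu : (0:ℝ) < u := hu
    rw [(auxC_hasDeriv x u hx hu).deriv]
    have hA : (0:ℝ) < u + x := by linarith
    have hA1 : (0:ℝ) < u + x + 1 := by linarith
    have hA2 : (0:ℝ) < u + x - 1 := by linarith
    have key : (1 / (u + x) - 1 / u) - x * (1 / (u + x + 1) - 1 / (u + x)) +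
        (x ^ 2 + x) / 2 * (1 / (u + x + 1) - 2 * (1 / (u + x)) + 1 / (u + x - 1)) =
        x * (1 - x ^ 2) / (u * (u + x) * (u + x - 1) * (u + x + 1)) := by
      field_simp
      ring
    rw [key]
    apply div_neg_of_neg_of_pos
    · nlinarith
    · positivity

lemma tendsto_logdiff (p q : ℝ) :
    Tendsto (fun n : ℕ => Real.log (p + n) - Real.log (q + n)) atTop (nhds 0) := by
  have hq : Tendsto (fun n : ℕ => q + (n : ℝ)) atTop atTop :=
    tendsto_atTop_add_const_left _ q tendsto_natCast_atTop_atTop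
  have h0 : Tendsto (fun n : ℕ => (p - q) / (q + (n : ℝ))) atTop (nhds 0) :=
    Tendsto.div_atTop tendsto_const_nhds hq
  have h1 : Tendsto (fun n : ℕ => 1 + (p - q) / (q + (n : ℝ))) atTop (nhds 1) := by
    simpa using h0.const_add (1 : ℝ)
  have hlog : Tendsto (fun n : ℕ => Real.log (1 + (p - q) / (q + (n : ℝ)))) atTop (nhds 0) := by
    have := (Real.continuousAt_log (by norm_num : (1:ℝ) ≠ 0)).tendsto.comp h1
    simpa [Function.comp_def] using this
  apply hlog.congr'
  have hev : ∀ᶠ n : ℕ in atTop, max (-p) (-q) < (n : ℝ) := by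
    obtain ⟨N, hN⟩ := exists_nat_gt (max (-p) (-q))
    filter_upwards [eventually_ge_atTop N] with n hn
    exact hN.trans_le (by exact_mod_cast Nat.cast_le.mpr hn)
  filter_upwards [hev] with n hn
  have hp : (0:ℝ) < p + n := by
    have := (max_lt_iff.mp hn).1; linarith
  have hqn : (0:ℝ) < q + n := by
    have := (max_lt_iff.mp hn).2; linarith
  have : 1 + (p - q) / (q + (n:ℝ)) = (p + n) / (q + n) := by field_simp; ring
  rw [this, Real.log_div hp.ne' hqn.ne']

lemma auxC_tendsto (x u : ℝ) (hx : 1 < x) :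
    Tendsto (fun n : ℕ => auxC x (u + n)) atTop (nhds 0) := by
  have T1 := tendsto_logdiff (u + x) u
  have T2 := tendsto_logdiff (u + x + 1) (u + x)
  have T3 := tendsto_logdiff (u + x - 1) (u + x)
  have comb : Tendsto (fun n : ℕ =>
      (Real.log (u + x + n) - Real.log (u + n)) -
        x * (Real.log (u + x + 1 + n) - Real.log (u + x + n)) +
        (x ^ 2 + x) / 2 * ((Real.log (u + x + 1 + n) - Real.log (u + x + n)) +
          (Real.log (u + x - 1 + n) - Real.log (u + x + n)))) atTop (nhds 0) := by
    have := (T1.sub (T2.const_mul x)).add ((T2.add T3).const_mul ((x ^ 2 + x) / 2))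
    simpa using this
  apply comb.congr
  intro n
  unfold auxC
  rw [show u + (n:ℝ) + x = u + x + n by ring, show u + x + (n:ℝ) + 1 = u + x + 1 + n by ring,
    show u + x + (n:ℝ) - 1 = u + x - 1 + n by ring]
  ring

lemma auxC_pos (x u : ℝ) (hx : 1 < x) (hu : 0 < u) : 0 < auxC x u := by
  have anti := auxC_anti x hx
  have h1 : auxC x (u + 1) < auxC x u :=
    anti (Set.mem_Ioi.mpr hu) (Set.mem_Ioi.mpr (by linarith)) (by linarith)
  have h0 : 0 ≤ auxC x (u + 1) := by
    refine le_of_tendsto (auxC_tendsto x (u + 1) hx) ?_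
    filter_upwards with n
    have hn : (0:ℝ) ≤ (n : ℝ) := Nat.cast_nonneg n
    rcases eq_or_lt_of_le hn with h | h
    · rw [← h, add_zero]
    · exact le_of_lt (anti (Set.mem_Ioi.mpr (by linarith))
        (Set.mem_Ioi.mpr (by linarith)) (by linarith))
  linarith

lemma auxD_step (x u : ℝ) (hx : 1 < x) (hu : 0 < u) :
    auxD x u = auxD x (u + 1) + auxC x u := by
  have hux : u + x ≠ 0 := by positivity
  have hG1 : Real.Gamma (u + x) ≠ 0 := (Real.Gamma_pos_of_pos (by positivity)).ne'
  have hGu : Real.Gamma u ≠ 0 := (Real.Gamma_pos_of_pos hu).ne'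
  have e1 : u + 1 + x = (u + x) + 1 := by ring
  have e2 : Real.log (Real.Gamma (u + 1 + x)) = Real.log (u + x) + Real.log (Real.Gamma (u + x)) := by
    rw [e1, Real.Gamma_add_one hux, Real.log_mul hux hG1]
  have e3 : Real.log (Real.Gamma (u + 1)) = Real.log u + Real.log (Real.Gamma u) := by
    rw [Real.Gamma_add_one hu.ne', Real.log_mul hu.ne' hGu]
  unfold auxD auxC
  rw [e2, e3, e1, show u + x + 1 - 1 = u + x by ring]
  ring

lemma auxD_tele (x u : ℝ) (hx : 1 < x) (hu : 0 < u) (n : ℕ) :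
    auxD x u = auxD x (u + n) + ∑ k ∈ Finset.range n, auxC x (u + k) := by
  induction n with
  | zero => simp
  | succ m ih =>
    rw [ih, Finset.sum_range_succ]
    have hstep := auxD_step x (u + m) hx (by positivity)
    have e : u + (m : ℝ) + 1 = u + ((m : ℕ) + 1 : ℕ) := by push_cast; ring
    rw [e] at hstep
    rw [hstep]
    ring

lemma logGamma_add_nat (t : ℝ) (ht : 0 < t) (m : ℕ) :
    Real.log (Real.Gamma (t + m)) =
      Real.log (Real.Gamma t) + ∑ j ∈ Finset.range m, Real.log (t + j) := by
  induction m with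
  | zero => simp
  | succ k ih =>
    have htk : (0:ℝ) < t + k := by positivity
    have e : t + ((k : ℕ) + 1 : ℕ) = (t + k) + 1 := by push_cast; ring
    rw [e, Real.Gamma_add_one htk.ne',
      Real.log_mul htk.ne' (Real.Gamma_pos_of_pos (by positivity)).ne', ih,
      Finset.sum_range_succ]
    ring

lemma gautschi (u f : ℝ) (hu : 0 < u) (hf0 : 0 ≤ f) (hf1 : f ≤ 1) :
    Real.log (Real.Gamma (u + f)) ≤ Real.log (Real.Gamma u) + f * Real.log u := by
  have hc := Real.convexOn_log_Gamma.2 (Set.mem_Ioi.mpr hu)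
    (Set.mem_Ioi.mpr (by linarith : (0:ℝ) < u + 1)) (by linarith : (0:ℝ) ≤ 1 - f) hf0
    (by ring)
  simp only [smul_eq_mul, Function.comp_apply] at hc
  have e1 : (1 - f) * u + f * (u + 1) = u + f := by ring
  rw [e1] at hc
  have e2 : Real.log (Real.Gamma (u + 1)) = Real.log u + Real.log (Real.Gamma u) := by
    rw [Real.Gamma_add_one hu.ne', Real.log_mul hu.ne' (Real.Gamma_pos_of_pos hu).ne']
  rw [e2] at hc
  calc Real.log (Real.Gamma (u + f)) ≤ (1 - f) * Real.log (Real.Gamma u) +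
        f * (Real.log u + Real.log (Real.Gamma u)) := hc
    _ = Real.log (Real.Gamma u) + f * Real.log u := by ring

lemma auxD_lower (x u : ℝ) (hx : 1 < x) (hu : 0 < u) :
    x * (Real.log (u + x) - Real.log u) -
      (x ^ 2 + x) / 2 * (Real.log (u + x) - Real.log (u + x - 1)) -
      ∑ j ∈ Finset.range ⌊x⌋₊, (Real.log (u + (x - ⌊x⌋₊) + j) - Real.log u) ≤ auxD x u := by
  obtain ⟨m, hm⟩ : ∃ m : ℕ, m = ⌊x⌋₊ := ⟨_, rfl⟩
  rw [← hm]
  obtain ⟨f, hf⟩ : ∃ f : ℝ, f = x - m := ⟨_, rfl⟩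
  rw [← hf]
  have hx0 : (0:ℝ) ≤ x := by linarith
  have hf0 : 0 ≤ f := by
    have := Nat.floor_le hx0
    rw [hf, hm]; push_cast; linarith
  have hf1 : f ≤ 1 := by
    have := Nat.lt_floor_add_one x
    rw [hf, hm]; push_cast; linarith
  have hfm : f + m = x := by rw [hf]; ring
  have hratio : Real.log (Real.Gamma (u + x)) - Real.log (Real.Gamma u) ≤
      f * Real.log u + ∑ j ∈ Finset.range m, Real.log (u + f + j) := by
    have e : u + x = (u + f) + m := by rw [← hfm]; ring
    rw [e, logGamma_add_nat (u + f) (by positivity) m]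
    have := gautschi u f hu hf0 hf1
    linarith
  have hsum : ∑ j ∈ Finset.range m, (Real.log (u + f + j) - Real.log u) =
      (∑ j ∈ Finset.range m, Real.log (u + f + j)) - m * Real.log u := by
    rw [Finset.sum_sub_distrib, Finset.sum_const, Finset.card_range]
    ring
  unfold auxD
  rw [hsum]
  have hmx : (m : ℝ) = x - f := by linarith
  rw [hmx]
  linarith [hratio]

lemma auxD_lb_tendsto (x s : ℝ) (hx : 1 < x) (hs : 0 < s) :
    Tendsto (fun n : ℕ =>
      x * (Real.log (s + n + x) - Real.log (s + n)) -
        (x ^ 2 + x) / 2 * (Real.log (s + n + x) - Real.log (s + n + x - 1)) -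
        ∑ j ∈ Finset.range ⌊x⌋₊, (Real.log (s + n + (x - ⌊x⌋₊) + j) - Real.log (s + n)))
      atTop (nhds 0) := by
  have T1 := tendsto_logdiff (s + x) s
  have T2 := tendsto_logdiff (s + x) (s + x - 1)
  have T3 : Tendsto (fun n : ℕ =>
      ∑ j ∈ Finset.range ⌊x⌋₊, (Real.log (s + (x - ⌊x⌋₊) + j + n) - Real.log (s + n)))
      atTop (nhds 0) := by
    have := tendsto_finset_sum (Finset.range ⌊x⌋₊)
      (fun j _ => tendsto_logdiff (s + (x - ⌊x⌋₊) + j) s)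
    simpa using this
  have comb := (T1.const_mul x).sub (T2.const_mul ((x ^ 2 + x) / 2)) |>.sub T3
  have comb0 : Tendsto (fun n : ℕ =>
      x * (Real.log (s + x + n) - Real.log (s + n)) -
        (x ^ 2 + x) / 2 * (Real.log (s + x + n) - Real.log (s + x - 1 + n)) -
        ∑ j ∈ Finset.range ⌊x⌋₊, (Real.log (s + (x - ⌊x⌋₊) + j + n) - Real.log (s + n)))
      atTop (nhds 0) := by simpa using comb
  apply comb0.congr
  intro n
  have e1 : s + x + (n:ℝ) = s + (n:ℝ) + x := by ring
  have e2 : s + x - 1 + (n:ℝ) = s + (n:ℝ) + x - 1 := by ring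
  rw [e1, e2]
  congr 1
  apply Finset.sum_congr rfl
  intro j _
  congr 2
  ring

lemma auxD_pos (x s : ℝ) (hx : 1 < x) (hs : 0 < s) : 0 < auxD x s := by
  have hc0 := auxC_pos x s hx hs
  have hc1 := auxC_pos x (s + 1) hx (by linarith)
  have hev : ∀ᶠ n : ℕ in atTop,
      -(auxC x (s + 1)) <
        x * (Real.log (s + n + x) - Real.log (s + n)) -
          (x ^ 2 + x) / 2 * (Real.log (s + n + x) - Real.log (s + n + x - 1)) -
          ∑ j ∈ Finset.range ⌊x⌋₊, (Real.log (s + n + (x - ⌊x⌋₊) + j) - Real.log (s + n)) := by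
    exact (auxD_lb_tendsto x s hx hs).eventually_const_lt (by linarith : -(auxC x (s+1)) < 0)
  obtain ⟨n, hn2, hn⟩ : ∃ n : ℕ, 2 ≤ n ∧
      -(auxC x (s + 1)) <
        x * (Real.log (s + n + x) - Real.log (s + n)) -
          (x ^ 2 + x) / 2 * (Real.log (s + n + x) - Real.log (s + n + x - 1)) -
          ∑ j ∈ Finset.range ⌊x⌋₊, (Real.log (s + n + (x - ⌊x⌋₊) + j) - Real.log (s + n)) := by
    obtain ⟨N, hN⟩ := eventually_atTop.mp hev
    exact ⟨max 2 N, le_max_left _ _, hN _ (le_max_right _ _)⟩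
  have hD_lb : -(auxC x (s + 1)) < auxD x (s + n) :=
    lt_of_lt_of_le hn (auxD_lower x (s + n) hx (by positivity))
  have htele := auxD_tele x s hx hs n
  have hsum_lb : auxC x s + auxC x (s + 1) ≤ ∑ k ∈ Finset.range n, auxC x (s + k) := by
    have h2 : ∑ k ∈ Finset.range 2, auxC x (s + k) ≤ ∑ k ∈ Finset.range n, auxC x (s + k) := by
      apply Finset.sum_le_sum_of_subset_of_nonneg
      · exact Finset.range_subset_range.mpr hn2
      · intro k _ _
        exact (auxC_pos x (s + k) hx (by positivity)).le
    have e : ∑ k ∈ Finset.range 2, auxC x (s + k) = auxC x s + auxC x (s + 1) := by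
      rw [Finset.sum_range_succ, Finset.sum_range_one]
      norm_num
    linarith
  linarith

theorem stmt_0 (x y : ℝ) (hy : 0 < y) (hx : 1 < x) :
    (Real.Gamma (x + y + 1) / Real.Gamma (y + 1)) ^ (1 / x) /
      (Real.Gamma (x + y + 2) / Real.Gamma (y + 1)) ^ (1 / (x + 1)) <
    Real.sqrt ((x + y) / (x + y + 1)) := by
  have hs : (0:ℝ) < y + 1 := by linarith
  have hD := auxD_pos x (y + 1) hx hs
  have hxy1 : (0:ℝ) < x + y + 1 := by linarith
  have hxy : (0:ℝ) < x + y := by linarith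
  have hxy2 : (0:ℝ) < x + y + 2 := by linarith
  have hGs : (0:ℝ) < Real.Gamma (y + 1) := Real.Gamma_pos_of_pos hs
  have hG1 : (0:ℝ) < Real.Gamma (x + y + 1) := Real.Gamma_pos_of_pos hxy1
  have hG2 : (0:ℝ) < Real.Gamma (x + y + 2) := Real.Gamma_pos_of_pos hxy2
  -- unfold auxD at hD
  unfold auxD at hD
  rw [show y + 1 + x = x + y + 1 by ring] at hD
  rw [show x + y + 1 - 1 = x + y by ring] at hD
  -- hD : 0 < x * log (x+y+1) - (x^2+x)/2 * (log (x+y+1) - log (x+y)) - (log Γ(x+y+1) - log Γ(y+1))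
  set a : ℝ := Real.log (Real.Gamma (x + y + 1)) - Real.log (Real.Gamma (y + 1)) with ha
  set b : ℝ := Real.log (x + y + 1) with hb
  set c : ℝ := Real.log (x + y) with hc
  have hA : (0:ℝ) < Real.Gamma (x + y + 1) / Real.Gamma (y + 1) := div_pos hG1 hGs
  have hB : (0:ℝ) < Real.Gamma (x + y + 2) / Real.Gamma (y + 1) := div_pos hG2 hGs
  have hLpos : (0:ℝ) < (Real.Gamma (x + y + 1) / Real.Gamma (y + 1)) ^ (1 / x) /
      (Real.Gamma (x + y + 2) / Real.Gamma (y + 1)) ^ (1 / (x + 1)) :=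
    div_pos (Real.rpow_pos_of_pos hA _) (Real.rpow_pos_of_pos hB _)
  have hRpos : (0:ℝ) < Real.sqrt ((x + y) / (x + y + 1)) :=
    Real.sqrt_pos.mpr (div_pos hxy hxy1)
  rw [← Real.log_lt_log_iff hLpos hRpos]
  have hlogL : Real.log ((Real.Gamma (x + y + 1) / Real.Gamma (y + 1)) ^ (1 / x) /
      (Real.Gamma (x + y + 2) / Real.Gamma (y + 1)) ^ (1 / (x + 1))) =
      (1 / x) * a - (1 / (x + 1)) * (b + a) := by
    rw [Real.log_div (Real.rpow_pos_of_pos hA _).ne' (Real.rpow_pos_of_pos hB _).ne',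
      Real.log_rpow hA, Real.log_rpow hB, Real.log_div hG1.ne' hGs.ne',
      Real.log_div hG2.ne' hGs.ne']
    have e3 : Real.log (Real.Gamma (x + y + 2)) = b + Real.log (Real.Gamma (x + y + 1)) := by
      rw [show x + y + 2 = (x + y + 1) + 1 by ring, Real.Gamma_add_one hxy1.ne',
        Real.log_mul hxy1.ne' hG1.ne', hb]
    rw [e3, ha]
    ring
  have hlogR : Real.log (Real.sqrt ((x + y) / (x + y + 1))) = (c - b) / 2 := by
    rw [Real.log_sqrt (div_pos hxy hxy1).le, Real.log_div hxy.ne' hxy1.ne', hc, hb]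
  rw [hlogL, hlogR]
  have hx0 : (0:ℝ) < x := by linarith
  have hx1 : (0:ℝ) < x + 1 := by linarith
  have hxx : (0:ℝ) < x * (x + 1) := by positivity
  have key : (1 / x) * a - (1 / (x + 1)) * (b + a) = (a - x * b) / (x * (x + 1)) := by
    field_simp
    ring
  rw [key, div_lt_iff₀ hxx]
  nlinarith [hD]
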